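/- The domain Ω_α^< = {x ∈ ℝ⁴ : x₄ < x₁x₂ + x₃² + x₁²x₃ + α x₁⁴} is affinely homogeneous: the group of affine automorphisms of ℝ⁴ preserving Ω_α^< acts transitively on Ω_α^<. -/

import Mathlib

noncomputable section OmegaAux

abbrev V4 : Type := ℝ × ℝ × ℝ × ℝ

def gfun (α : ℝ) (p : V4) : ℝ :=
  p.1 * p.2.1 + p.2.2.1 ^ 2 + p.1 ^ 2 * p.2.2.1 + α * p.1 ^ 4 - p.2.2.2

def lin4 (m11 m12 m13 m14 m21 m22 m23 m24 m31 m32 m33 m34 m41 m42 m43 m44 : ℝ) :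
    V4 →ₗ[ℝ] V4 where
  toFun p := (m11*p.1+m12*p.2.1+m13*p.2.2.1+m14*p.2.2.2,
              m21*p.1+m22*p.2.1+m23*p.2.2.1+m24*p.2.2.2,
              m31*p.1+m32*p.2.1+m33*p.2.2.1+m34*p.2.2.2,
              m41*p.1+m42*p.2.1+m43*p.2.2.1+m44*p.2.2.2)
  map_add' a b := by
    simp only [Prod.fst_add, Prod.snd_add, Prod.mk_add_mk, Prod.ext_iff]
    exact ⟨by ring, by ring, by ring, by ring⟩
  map_smul' c a := by
    simp only [Prod.smul_fst, Prod.smul_snd, smul_eq_mul, Prod.smul_mk, RingHom.id_apply,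
      Prod.ext_iff]
    exact ⟨by ring, by ring, by ring, by ring⟩

lemma lin4_apply (m11 m12 m13 m14 m21 m22 m23 m24 m31 m32 m33 m34 m41 m42 m43 m44 : ℝ)
    (p : V4) :
    lin4 m11 m12 m13 m14 m21 m22 m23 m24 m31 m32 m33 m34 m41 m42 m43 m44 p =
      (m11*p.1+m12*p.2.1+m13*p.2.2.1+m14*p.2.2.2,
       m21*p.1+m22*p.2.1+m23*p.2.2.1+m24*p.2.2.2,
       m31*p.1+m32*p.2.1+m33*p.2.2.1+m34*p.2.2.2,
       m41*p.1+m42*p.2.1+m43*p.2.2.1+m44*p.2.2.2) := rfl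

def affE (e : V4 ≃ₗ[ℝ] V4) (c : V4) : V4 ≃ᵃ[ℝ] V4 :=
  e.toAffineEquiv.trans (AffineEquiv.constVAdd ℝ V4 c)

lemma affE_apply (e : V4 ≃ₗ[ℝ] V4) (c p : V4) : affE e c p = c + e p := by
  simp [affE, AffineEquiv.trans_apply, vadd_eq_add]

/-- linear part of ψ_r -/
def linPsi (α r : ℝ) : V4 →ₗ[ℝ] V4 :=
  lin4 1 0 0 0
    (-4*α*(4*α-1)*r^2) 1 (2*(4*α-1)*r) 0
    (-4*α*r) 0 1 0
    (-(4/3)*α*(4*α-1)*r^3) r ((4*α-1)*r^2) 1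

def Psi (α r : ℝ) : V4 ≃ᵃ[ℝ] V4 :=
  affE (LinearEquiv.ofLinear (linPsi α r) (linPsi α (-r))
    (by refine LinearMap.ext fun p => ?_
        simp only [LinearMap.comp_apply, LinearMap.id_apply, linPsi, lin4_apply, Prod.ext_iff]
        exact ⟨by ring, by ring, by ring, by ring⟩)
    (by refine LinearMap.ext fun p => ?_
        simp only [LinearMap.comp_apply, LinearMap.id_apply, linPsi, lin4_apply, Prod.ext_iff]
        exact ⟨by ring, by ring, by ring, by ring⟩))
    (r, -(4/3)*α*(4*α-1)*r^3, -2*α*r^2, -(1/3)*α*(4*α-1)*r^4)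

lemma Psi_apply (α r : ℝ) (p : V4) :
    Psi α r p =
      (p.1 + r,
       -4*α*(4*α-1)*r^2*p.1 + p.2.1 + 2*(4*α-1)*r*p.2.2.1 - (4/3)*α*(4*α-1)*r^3,
       -4*α*r*p.1 + p.2.2.1 - 2*α*r^2,
       -(4/3)*α*(4*α-1)*r^3*p.1 + r*p.2.1 + (4*α-1)*r^2*p.2.2.1 + p.2.2.2
         - (1/3)*α*(4*α-1)*r^4) := by
  simp only [Psi, affE_apply, LinearEquiv.ofLinear_apply, linPsi, lin4_apply, Prod.mk_add_mk,
    Prod.ext_iff]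
  exact ⟨by ring, by ring, by ring, by ring⟩

lemma Psi_g (α r : ℝ) (p : V4) : gfun α (Psi α r p) = gfun α p := by
  simp only [Psi_apply, gfun]; ring

/-- ν_t -/
def Nu (t : ℝ) : V4 ≃ᵃ[ℝ] V4 :=
  affE (LinearEquiv.ofLinear
      (lin4 1 0 0 0 (-t) 1 0 0 0 0 1 0 0 0 (2*t) 1)
      (lin4 1 0 0 0 t 1 0 0 0 0 1 0 0 0 (-(2*t)) 1)
    (by refine LinearMap.ext fun p => ?_
        simp only [LinearMap.comp_apply, LinearMap.id_apply, lin4_apply, Prod.ext_iff]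
        exact ⟨by ring, by ring, by ring, by ring⟩)
    (by refine LinearMap.ext fun p => ?_
        simp only [LinearMap.comp_apply, LinearMap.id_apply, lin4_apply, Prod.ext_iff]
        exact ⟨by ring, by ring, by ring, by ring⟩))
    (0, 0, t, t^2)

lemma Nu_apply (t : ℝ) (p : V4) :
    Nu t p = (p.1, -t*p.1 + p.2.1, p.2.2.1 + t, 2*t*p.2.2.1 + p.2.2.2 + t^2) := by
  simp only [Nu, affE_apply, LinearEquiv.ofLinear_apply, lin4_apply, Prod.mk_add_mk,
    Prod.ext_iff]
  exact ⟨by ring, by ring, by ring, by ring⟩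

lemma Nu_g (α t : ℝ) (p : V4) : gfun α (Nu t p) = gfun α p := by
  simp only [Nu_apply, gfun]; ring

/-- μ_s -/
def Mu (s : ℝ) : V4 ≃ᵃ[ℝ] V4 :=
  affE (LinearEquiv.ofLinear
      (lin4 1 0 0 0 0 1 0 0 0 0 1 0 s 0 0 1)
      (lin4 1 0 0 0 0 1 0 0 0 0 1 0 (-s) 0 0 1)
    (by refine LinearMap.ext fun p => ?_
        simp only [LinearMap.comp_apply, LinearMap.id_apply, lin4_apply, Prod.ext_iff]
        exact ⟨by ring, by ring, by ring, by ring⟩)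
    (by refine LinearMap.ext fun p => ?_
        simp only [LinearMap.comp_apply, LinearMap.id_apply, lin4_apply, Prod.ext_iff]
        exact ⟨by ring, by ring, by ring, by ring⟩))
    (0, s, 0, 0)

lemma Mu_apply (s : ℝ) (p : V4) :
    Mu s p = (p.1, p.2.1 + s, p.2.2.1, s*p.1 + p.2.2.2) := by
  simp only [Mu, affE_apply, LinearEquiv.ofLinear_apply, lin4_apply, Prod.mk_add_mk,
    Prod.ext_iff]
  exact ⟨by ring, by ring, by ring, by ring⟩

lemma Mu_g (α s : ℝ) (p : V4) : gfun α (Mu s p) = gfun α p := by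
  simp only [Mu_apply, gfun]; ring

/-- φ_q -/
def Phi (q : ℝ) (hq : q ≠ 0) : V4 ≃ᵃ[ℝ] V4 :=
  affE (LinearEquiv.ofLinear
      (lin4 q 0 0 0 0 (q^3) 0 0 0 0 (q^2) 0 0 0 0 (q^4))
      (lin4 q⁻¹ 0 0 0 0 (q⁻¹^3) 0 0 0 0 (q⁻¹^2) 0 0 0 0 (q⁻¹^4))
    (by refine LinearMap.ext fun p => ?_
        simp only [LinearMap.comp_apply, LinearMap.id_apply, lin4_apply, Prod.ext_iff]
        refine ⟨?_, ?_, ?_, ?_⟩ <;> field_simp <;> ring)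
    (by refine LinearMap.ext fun p => ?_
        simp only [LinearMap.comp_apply, LinearMap.id_apply, lin4_apply, Prod.ext_iff]
        refine ⟨?_, ?_, ?_, ?_⟩ <;> field_simp <;> ring))
    (0, 0, 0, 0)

lemma Phi_apply (q : ℝ) (hq : q ≠ 0) (p : V4) :
    Phi q hq p = (q*p.1, q^3*p.2.1, q^2*p.2.2.1, q^4*p.2.2.2) := by
  simp only [Phi, affE_apply, LinearEquiv.ofLinear_apply, lin4_apply, Prod.mk_add_mk,
    Prod.ext_iff]
  exact ⟨by ring, by ring, by ring, by ring⟩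

lemma Phi_g (α : ℝ) (q : ℝ) (hq : q ≠ 0) (p : V4) :
    gfun α (Phi q hq p) = q^4 * gfun α p := by
  simp only [Phi_apply, gfun]; ring

lemma normalizeOmega (α : ℝ) (p : V4) (hp : 0 < gfun α p) :
    ∃ N : V4 ≃ᵃ[ℝ] V4, (∀ q : V4, 0 < gfun α (N q) ↔ 0 < gfun α q) ∧
      N p = ((0 : ℝ), (0 : ℝ), (0 : ℝ), (-1 : ℝ)) := by
  set r := -p.1 with hr
  set q1 := Psi α r p with hq1
  set t := -(q1.2.2.1) with ht
  set q2 := Nu t q1 with hq2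
  set s := -(q2.2.1) with hs
  set q3 := Mu s q2 with hq3
  have hq1_1 : q1.1 = 0 := by simp [hq1, Psi_apply, hr]
  have hq2_1 : q2.1 = 0 := by simp [hq2, Nu_apply, hq1_1]
  have hq2_3 : q2.2.2.1 = 0 := by simp [hq2, Nu_apply, ht]
  have hq3_1 : q3.1 = 0 := by simp [hq3, Mu_apply, hq2_1]
  have hq3_2 : q3.2.1 = 0 := by simp [hq3, Mu_apply, hs]
  have hq3_3 : q3.2.2.1 = 0 := by simp [hq3, Mu_apply, hq2_3]
  have hg3 : gfun α q3 = gfun α p := by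
    rw [hq3, Mu_g, hq2, Nu_g, hq1, Psi_g]
  have hw : q3.2.2.2 = -(gfun α p) := by
    have := hg3
    simp only [gfun, hq3_1, hq3_2, hq3_3] at this
    simp only [gfun]
    linarith
  set c : ℝ := (gfun α p) ^ ((-1 : ℝ)/4) with hc
  have hcpos : 0 < c := Real.rpow_pos_of_pos hp _
  have hcne : c ≠ 0 := ne_of_gt hcpos
  have hc4 : c ^ (4:ℕ) = (gfun α p)⁻¹ := by
    rw [hc, ← Real.rpow_natCast ((gfun α p) ^ ((-1 : ℝ)/4)) 4, ← Real.rpow_mul hp.le]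
    rw [show ((-1:ℝ)/4 * (4:ℕ) : ℝ) = -1 by norm_num, Real.rpow_neg_one]
  refine ⟨(Psi α r).trans ((Nu t).trans ((Mu s).trans (Phi c hcne))), fun q => ?_, ?_⟩
  · simp only [AffineEquiv.trans_apply, Phi_g, Mu_g, Nu_g, Psi_g]
    constructor
    · intro h
      nlinarith [pow_pos hcpos 4]
    · intro h
      exact mul_pos (pow_pos hcpos 4) h
  · simp only [AffineEquiv.trans_apply, ← hq1, ← hq2, ← hq3, Phi_apply]
    rw [hq3_1, hq3_2, hq3_3, hw]
    have : c ^ 4 * -(gfun α p) = -1 := by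
      rw [hc4]
      field_simp
    simp only [Prod.ext_iff]
    refine ⟨by ring, by ring, by ring, by linarith [this]⟩

end OmegaAux

/-- The domain `Ω_α^<` is affinely homogeneous: the group of affine automorphisms
of `ℝ⁴` preserving it acts transitively. -/
theorem Omega_lt_affinely_homogeneous (α : ℝ)
    (x y : ℝ × ℝ × ℝ × ℝ)
    (hx : x ∈ {p : ℝ × ℝ × ℝ × ℝ |
        p.2.2.2 < p.1 * p.2.1 + p.2.2.1 ^ 2 + p.1 ^ 2 * p.2.2.1 + α * p.1 ^ 4})
    (hy : y ∈ {p : ℝ × ℝ × ℝ × ℝ |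
        p.2.2.2 < p.1 * p.2.1 + p.2.2.1 ^ 2 + p.1 ^ 2 * p.2.2.1 + α * p.1 ^ 4}) :
    ∃ F : (ℝ × ℝ × ℝ × ℝ) ≃ᵃ[ℝ] (ℝ × ℝ × ℝ × ℝ),
      (⇑F '' {p : ℝ × ℝ × ℝ × ℝ |
          p.2.2.2 < p.1 * p.2.1 + p.2.2.1 ^ 2 + p.1 ^ 2 * p.2.2.1 + α * p.1 ^ 4} =
        {p : ℝ × ℝ × ℝ × ℝ |
          p.2.2.2 < p.1 * p.2.1 + p.2.2.1 ^ 2 + p.1 ^ 2 * p.2.2.1 + α * p.1 ^ 4}) ∧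
      F x = y := by
  have hmem : ∀ p : ℝ × ℝ × ℝ × ℝ,
      (p ∈ {p : ℝ × ℝ × ℝ × ℝ |
        p.2.2.2 < p.1 * p.2.1 + p.2.2.1 ^ 2 + p.1 ^ 2 * p.2.2.1 + α * p.1 ^ 4}) ↔
        0 < gfun α p := by
    intro p
    simp only [Set.mem_setOf_eq, gfun]
    constructor <;> intro <;> linarith
  obtain ⟨Nx, hNx, hNxx⟩ := normalizeOmega α x ((hmem x).1 hx)
  obtain ⟨Ny, hNy, hNyy⟩ := normalizeOmega α y ((hmem y).1 hy)
  refine ⟨Nx.trans Ny.symm, ?_, ?_⟩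
  · have hNysymm : ∀ q : V4, 0 < gfun α (Ny.symm q) ↔ 0 < gfun α q := by
      intro q
      have := hNy (Ny.symm q)
      rw [AffineEquiv.apply_symm_apply] at this
      exact this.symm
    have key : ∀ q : V4, 0 < gfun α ((Nx.trans Ny.symm) q) ↔ 0 < gfun α q := by
      intro q
      simp only [AffineEquiv.trans_apply]
      rw [hNysymm, hNx]
    ext z
    constructor
    · rintro ⟨p, hpS, rfl⟩
      exact (hmem _).2 ((key p).2 ((hmem p).1 hpS))
    · intro hz
      refine ⟨(Nx.trans Ny.symm).symm z, ?_, AffineEquiv.apply_symm_apply _ z⟩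
      have := key ((Nx.trans Ny.symm).symm z)
      rw [AffineEquiv.apply_symm_apply] at this
      exact (hmem _).2 (this.1 ((hmem z).1 hz))
  · have : Ny.symm ((0 : ℝ), (0 : ℝ), (0 : ℝ), (-1 : ℝ)) = y := by
      rw [← hNyy, AffineEquiv.symm_apply_apply]
    simp only [AffineEquiv.trans_apply, hNxx, this]
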